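/- arXiv:1207.4722 — 9 statements merged into one kernel-verified Lean document; each statement's English description precedes it below -/
import Mathlib

section
/- The set of values of the function (1+y)(1+z)(y+z)/(yz) on the torus {|y| = |z| = 1} is exactly the real interval [−1, 8]; that is, {k ∈ ℂ : ∃ θ, φ ∈ ℝ, (1 + e^{iθ})(1 + e^{iφ})(e^{iθ} + e^{iφ}) = k·e^{i(θ+φ)}} = {k ∈ ℂ : k is real and −1 ≤ k ≤ 8}. -/
open Complex

/-- The set `𝒦_g` of values of `(1+y)(1+z)(y+z)/(yz)` on the torus `|y| = |z| = 1`
is exactly the real interval `[-1, 8]`. -/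
theorem Kg_eq_Icc :
    {k : ℂ | ∃ θ φ : ℝ,
        (1 + Complex.exp (Complex.I * θ)) * (1 + Complex.exp (Complex.I * φ)) *
          (Complex.exp (Complex.I * θ) + Complex.exp (Complex.I * φ)) =
        k * Complex.exp (Complex.I * (θ + φ))} =
    {k : ℂ | ∃ x : ℝ, k = (x : ℂ) ∧ -1 ≤ x ∧ x ≤ 8} := by
  ext k
  simp only [Set.mem_setOf_eq]
  constructor
  · rintro ⟨θ, φ, h⟩
    refine ⟨2 + 2*Real.cos θ + 2*Real.cos φ + 2*Real.cos (θ - φ), ?_, ?_, ?_⟩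
    · have hE : Complex.exp (Complex.I * ((θ : ℂ) + (φ : ℂ))) ≠ 0 := Complex.exp_ne_zero _
      have key : ((2 + 2*Real.cos θ + 2*Real.cos φ + 2*Real.cos (θ - φ) : ℝ) : ℂ) *
          Complex.exp (Complex.I * ((θ : ℂ) + (φ : ℂ))) =
          (1 + Complex.exp (Complex.I * θ)) * (1 + Complex.exp (Complex.I * φ)) *
          (Complex.exp (Complex.I * θ) + Complex.exp (Complex.I * φ)) := by
        have h1 := Complex.sin_sq_add_cos_sq (θ : ℂ)
        have h2 := Complex.sin_sq_add_cos_sq (φ : ℂ)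
        push_cast [Complex.ofReal_cos]
        rw [Complex.cos_sub,
          show Complex.I * ((θ : ℂ) + (φ : ℂ)) = (θ : ℂ) * Complex.I + (φ : ℂ) * Complex.I by ring,
          Complex.exp_add,
          show Complex.I * (θ : ℂ) = (θ : ℂ) * Complex.I by ring,
          show Complex.I * (φ : ℂ) = (φ : ℂ) * Complex.I by ring,
          Complex.exp_mul_I, Complex.exp_mul_I]
        have hI : Complex.I^2 = -1 := Complex.I_sq
        linear_combination
          (-Complex.I^2 - Complex.sin (φ:ℂ)*Complex.I^3 + 2*Complex.sin (φ:ℂ)^2*Complex.I^2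
            - Complex.cos (φ:ℂ)*Complex.I^2 + 2*Complex.cos (φ:ℂ)*Complex.sin (φ:ℂ)*Complex.I) * h1 +
          (Complex.I^2 - Complex.sin (θ:ℂ)*Complex.I^3 - Complex.cos (θ:ℂ)*Complex.I^2
            + 2*Complex.cos (θ:ℂ)*Complex.sin (θ:ℂ)*Complex.I - 2*Complex.cos (θ:ℂ)^2*Complex.I^2) * h2 +
          (-(Complex.sin (φ:ℂ)*Complex.I) - Complex.cos (φ:ℂ) - Complex.cos (φ:ℂ)^2
            - Complex.sin (θ:ℂ)*Complex.I + Complex.sin (θ:ℂ)*Complex.cos (φ:ℂ)^2*Complex.I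
            - Complex.cos (θ:ℂ) + Complex.cos (θ:ℂ)*Complex.cos (φ:ℂ)^2
            + 2*Complex.cos (θ:ℂ)*Complex.sin (θ:ℂ)*Complex.cos (φ:ℂ)*Complex.sin (φ:ℂ)
            - Complex.cos (θ:ℂ)^2 + Complex.cos (θ:ℂ)^2*Complex.sin (φ:ℂ)*Complex.I
            + Complex.cos (θ:ℂ)^2*Complex.cos (φ:ℂ) + 2*Complex.cos (θ:ℂ)^2*Complex.cos (φ:ℂ)^2) * hI
      have h2 : ((2 + 2*Real.cos θ + 2*Real.cos φ + 2*Real.cos (θ - φ) : ℝ) : ℂ) *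
          Complex.exp (Complex.I * ((θ : ℂ) + (φ : ℂ))) =
          k * Complex.exp (Complex.I * ((θ : ℂ) + (φ : ℂ))) := by
        rw [key]; exact h
      exact (mul_right_cancel₀ hE h2).symm
    · rw [Real.cos_sub]
      nlinarith [sq_nonneg (Real.cos θ + Real.cos φ + 1), sq_nonneg (Real.sin θ + Real.sin φ),
        Real.sin_sq_add_cos_sq θ, Real.sin_sq_add_cos_sq φ]
    · rw [Real.cos_sub]
      nlinarith [sq_nonneg (Real.cos θ - Real.cos φ), sq_nonneg (Real.sin θ - Real.sin φ),
        Real.sin_sq_add_cos_sq θ, Real.sin_sq_add_cos_sq φ, Real.cos_le_one θ,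
        Real.cos_le_one φ, Real.neg_one_le_cos θ, Real.neg_one_le_cos φ]
  · rintro ⟨x, rfl, hx1, hx2⟩
    have h0 : (0:ℝ) ≤ 1 + x := by linarith
    set c : ℝ := (Real.sqrt (1 + x) - 1) / 2 with hc
    have hs : Real.sqrt (1 + x) ^ 2 = 1 + x := Real.sq_sqrt h0
    have hsnn : 0 ≤ Real.sqrt (1 + x) := Real.sqrt_nonneg _
    have hs3 : Real.sqrt (1 + x) ≤ 3 := by
      rw [show (3:ℝ) = Real.sqrt 9 by
        rw [show (9:ℝ) = 3^2 by norm_num, Real.sqrt_sq (by norm_num)]]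
      exact Real.sqrt_le_sqrt (by linarith)
    have hcl : -1 ≤ c := by rw [hc]; linarith
    have hcu : c ≤ 1 := by rw [hc]; linarith
    set t : ℝ := Real.arccos c with htdef
    have hct : Real.cos t = c := Real.cos_arccos hcl hcu
    have hx4 : 4*c^2 + 4*c = x := by rw [hc]; nlinarith [hs]
    refine ⟨t, -t, ?_⟩
    have hxC : (x : ℂ) = 4*Complex.cos (t:ℂ)^2 + 4*Complex.cos (t:ℂ) := by
      rw [← hx4, ← hct]
      push_cast [Complex.ofReal_cos]
      ring
    have h1 := Complex.sin_sq_add_cos_sq (t : ℂ)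
    push_cast
    rw [show Complex.I * ((t : ℂ) + -(t:ℂ)) = 0 by ring, Complex.exp_zero,
      show Complex.I * (t : ℂ) = (t : ℂ) * Complex.I by ring,
      show Complex.I * (-(t : ℂ)) = (-(t:ℂ)) * Complex.I by ring,
      Complex.exp_mul_I, Complex.exp_mul_I, Complex.cos_neg, Complex.sin_neg]
    linear_combination (-hxC) + (-2*Complex.cos (t:ℂ)*Complex.I^2) * h1 +
      (-2*Complex.cos (t:ℂ) + 2*Complex.cos (t:ℂ)^3) * Complex.I_sq
end

section
/- The intersection of the set of values of (y³ + z³ + 1)/(yz) on the torus {|y| = |z| = 1} with the real line is the interval [−1, 3]; that is, {k ∈ ℝ : ∃ θ, φ ∈ ℝ, e^{3iθ} + e^{3iφ} + 1 = k·e^{i(θ+φ)}} = [−1, 3]. -/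
open Complex

lemma key_real (a b : ℝ) (h : Real.sin a + Real.sin b = Real.sin (a + b)) :
    -1 ≤ Real.cos a + Real.cos b + Real.cos (a + b) ∧
      Real.cos a + Real.cos b + Real.cos (a + b) ≤ 3 := by
  have ea : Real.sin a = Real.sin ((a + b) / 2) * Real.cos ((a - b) / 2)
      + Real.cos ((a + b) / 2) * Real.sin ((a - b) / 2) := by
    rw [← Real.sin_add]; congr 1; ring
  have eb : Real.sin b = Real.sin ((a + b) / 2) * Real.cos ((a - b) / 2)
      - Real.cos ((a + b) / 2) * Real.sin ((a - b) / 2) := by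
    rw [← Real.sin_sub]; congr 1; ring
  have ea' : Real.cos a = Real.cos ((a + b) / 2) * Real.cos ((a - b) / 2)
      - Real.sin ((a + b) / 2) * Real.sin ((a - b) / 2) := by
    rw [← Real.cos_add]; congr 1; ring
  have eb' : Real.cos b = Real.cos ((a + b) / 2) * Real.cos ((a - b) / 2)
      + Real.sin ((a + b) / 2) * Real.sin ((a - b) / 2) := by
    rw [← Real.cos_sub]; congr 1; ring
  have hs : Real.sin a + Real.sin b
      = 2 * Real.sin ((a + b) / 2) * Real.cos ((a - b) / 2) := by
    rw [ea, eb]; ring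
  have hc : Real.cos a + Real.cos b
      = 2 * Real.cos ((a + b) / 2) * Real.cos ((a - b) / 2) := by
    rw [ea', eb']; ring
  have h2 : Real.sin (a + b)
      = 2 * Real.sin ((a + b) / 2) * Real.cos ((a + b) / 2) := by
    rw [show a + b = 2 * ((a + b) / 2) by ring, Real.sin_two_mul]
    ring_nf
  have h3 : Real.cos (a + b) = 2 * Real.cos ((a + b) / 2) ^ 2 - 1 := by
    rw [show a + b = 2 * ((a + b) / 2) by ring, Real.cos_two_mul]
    ring_nf
  set s := Real.sin ((a + b) / 2) with hsdef
  set c := Real.cos ((a + b) / 2) with hcdef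
  set d := Real.cos ((a - b) / 2) with hddef
  have hpy : s ^ 2 + c ^ 2 = 1 := Real.sin_sq_add_cos_sq _
  have hc1 : -1 ≤ c := Real.neg_one_le_cos _
  have hc2 : c ≤ 1 := Real.cos_le_one _
  have hd1 : -1 ≤ d := Real.neg_one_le_cos _
  have hd2 : d ≤ 1 := Real.cos_le_one _
  have hzero : s * (d - c) = 0 := by
    rw [hs, h2] at h; linear_combination h / 2
  rw [hc, h3]
  rcases mul_eq_zero.mp hzero with h0 | h0
  · have hcsq : c ^ 2 = 1 := by nlinarith
    constructor <;> nlinarith [mul_self_nonneg (c - d), mul_self_nonneg (c + d)]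
  · have hdc : d = c := by linarith
    constructor <;> nlinarith [hdc]

/-- The intersection of the set `𝒦_n` of values of `(y³+z³+1)/(yz)` on the torus
`|y| = |z| = 1` with the real line is the interval `[-1, 3]`. -/
theorem Kn_inter_real_eq_Icc :
    {k : ℝ | ∃ θ φ : ℝ,
        Complex.exp (3 * Complex.I * θ) + Complex.exp (3 * Complex.I * φ) + 1 =
          (k : ℂ) * Complex.exp (Complex.I * (θ + φ))} =
    Set.Icc (-1 : ℝ) 3 := by
  ext k
  simp only [Set.mem_setOf_eq, Set.mem_Icc]
  constructor
  · rintro ⟨θ, φ, h⟩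
    have h2 : Complex.exp (((2 * θ - φ : ℝ) : ℂ) * Complex.I)
        + Complex.exp (((2 * φ - θ : ℝ) : ℂ) * Complex.I)
        + Complex.exp (((-(θ + φ) : ℝ) : ℂ) * Complex.I) = (k : ℂ) := by
      have h' := congrArg (· * Complex.exp (-(Complex.I * (θ + φ)))) h
      simp only [add_mul, one_mul, mul_assoc, ← Complex.exp_add] at h'
      rw [show Complex.I * ((θ : ℂ) + φ) + -(Complex.I * ((θ : ℂ) + φ)) = 0 by ring,
        Complex.exp_zero, mul_one] at h'
      rw [show (((2 * θ - φ : ℝ) : ℂ) * Complex.I)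
          = 3 * (Complex.I * θ) + -(Complex.I * (θ + φ)) by push_cast; ring,
        show (((2 * φ - θ : ℝ) : ℂ) * Complex.I)
          = 3 * (Complex.I * φ) + -(Complex.I * (θ + φ)) by push_cast; ring,
        show (((-(θ + φ) : ℝ) : ℂ) * Complex.I)
          = -(Complex.I * (θ + φ)) by push_cast; ring]
      exact h'
    have him := congrArg Complex.im h2
    have hre := congrArg Complex.re h2
    simp only [Complex.add_im, Complex.add_re, Complex.exp_ofReal_mul_I_im,
      Complex.exp_ofReal_mul_I_re, Complex.ofReal_im, Complex.ofReal_re] at him hre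
    rw [Real.cos_neg] at hre
    rw [Real.sin_neg] at him
    have hab : (2 * θ - φ) + (2 * φ - θ) = θ + φ := by ring
    have hsin : Real.sin (2 * θ - φ) + Real.sin (2 * φ - θ)
        = Real.sin ((2 * θ - φ) + (2 * φ - θ)) := by
      rw [hab]; linarith
    have := key_real (2 * θ - φ) (2 * φ - θ) hsin
    rw [hab] at this
    constructor <;> linarith [this.1, this.2]
  · rintro ⟨h1, h3⟩
    refine ⟨Real.arccos ((k - 1) / 2) / 3, -(Real.arccos ((k - 1) / 2) / 3), ?_⟩
    set t := Real.arccos ((k - 1) / 2) with ht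
    have hcos : Real.cos t = (k - 1) / 2 :=
      Real.cos_arccos (by linarith) (by linarith)
    have e1 : 3 * Complex.I * ((t / 3 : ℝ) : ℂ) = ((t : ℝ) : ℂ) * Complex.I := by
      push_cast; ring
    have e2 : 3 * Complex.I * ((-(t / 3) : ℝ) : ℂ) = ((-t : ℝ) : ℂ) * Complex.I := by
      push_cast; ring
    have e3 : Complex.I * (((t / 3 : ℝ) : ℂ) + ((-(t / 3) : ℝ) : ℂ)) = 0 := by
      push_cast; ring
    rw [e1, e2, e3, Complex.exp_zero, mul_one, Complex.exp_mul_I, Complex.exp_mul_I]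
    rw [← Complex.ofReal_cos, ← Complex.ofReal_sin, ← Complex.ofReal_cos,
      ← Complex.ofReal_sin, Real.cos_neg, Real.sin_neg, hcos]
    push_cast
    ring
end

section
/- For k ∈ ℂ: (a) the projective plane cubic y³ + z³ + w³ = k·yzw is singular (i.e. there is a nonzero point (y,z,w) ∈ ℂ³ on the cubic at which all three partial derivatives of y³ + z³ + w³ − kyzw vanish) if and only if k = 3 or k² + 3k + 9 = 0 (equivalently k³ = 27); (b) the projective plane cubic (w+y)(w+z)(y+z) = k·yzw is singular (all partial derivatives of (w+y)(w+z)(y+z) − kyzw vanish at some nonzero point of the cubic) if and only if k ∈ {−1, 0, 8}. -/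
/-- Singularity classification for the two families of plane cubics.
(a) The projective cubic `y³ + z³ + w³ = k·yzw` is singular iff `k = 3` or
`k² + 3k + 9 = 0`; (b) the projective cubic `(w+y)(w+z)(y+z) = k·yzw` is
singular iff `k ∈ {-1, 0, 8}`. Singularity means that there is a nonzero point
of the cubic at which all three partial derivatives vanish. -/
theorem singular_cubics (k : ℂ) :
    ((∃ y z w : ℂ, (y, z, w) ≠ (0, 0, 0) ∧
        y ^ 3 + z ^ 3 + w ^ 3 - k * y * z * w = 0 ∧
        3 * y ^ 2 - k * z * w = 0 ∧
        3 * z ^ 2 - k * y * w = 0 ∧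
        3 * w ^ 2 - k * y * z = 0) ↔
      (k = 3 ∨ k ^ 2 + 3 * k + 9 = 0)) ∧
    ((∃ y z w : ℂ, (y, z, w) ≠ (0, 0, 0) ∧
        (w + y) * (w + z) * (y + z) - k * y * z * w = 0 ∧
        (w + z) * (y + z) + (w + y) * (w + z) - k * z * w = 0 ∧
        (w + y) * (y + z) + (w + y) * (w + z) - k * y * w = 0 ∧
        (w + z) * (y + z) + (w + y) * (y + z) - k * y * z = 0) ↔
      (k = -1 ∨ k = 0 ∨ k = 8)) := by
  constructor
  · -- part (a)
    constructor
    · rintro ⟨y, z, w, hne, hF, h1, h2, h3⟩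
      -- all coordinates are nonzero
      have hy : y ≠ 0 := by
        intro hy; subst hy
        have hz : z = 0 := by
          have : z ^ 2 = 0 := by linear_combination h2 / 3
          exact pow_eq_zero_iff (by norm_num) |>.1 this
        have hw : w = 0 := by
          have : w ^ 2 = 0 := by linear_combination h3 / 3
          exact pow_eq_zero_iff (by norm_num) |>.1 this
        exact hne (by simp [hz, hw])
      have hz : z ≠ 0 := by
        intro hz; subst hz
        have hy0 : y = 0 := by
          have : y ^ 2 = 0 := by linear_combination h1 / 3
          exact pow_eq_zero_iff (by norm_num) |>.1 this
        exact hy hy0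
      have hw : w ≠ 0 := by
        intro hw; subst hw
        have hy0 : y = 0 := by
          have : y ^ 2 = 0 := by linear_combination h1 / 3
          exact pow_eq_zero_iff (by norm_num) |>.1 this
        exact hy hy0
      have key : (k ^ 3 - 27) * (y * z * w) ^ 2 = 0 := by
        linear_combination (-(9 * z ^ 2 * w ^ 2)) * h1 - (3 * k * z * w ^ 3) * h2
          - (k ^ 2 * y * z * w ^ 2) * h3
      have hk3 : k ^ 3 - 27 = 0 := by
        rcases mul_eq_zero.1 key with h | h
        · exact h
        · exact absurd (pow_eq_zero_iff (n := 2) (by norm_num) |>.1 h)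
            (by exact mul_ne_zero (mul_ne_zero hy hz) hw)
      have hfac : (k - 3) * (k ^ 2 + 3 * k + 9) = 0 := by linear_combination hk3
      rcases mul_eq_zero.1 hfac with h | h
      · exact Or.inl (by linear_combination h)
      · exact Or.inr h
    · intro hk
      have hk3 : k ^ 3 = 27 := by
        rcases hk with h | h
        · rw [h]; norm_num
        · linear_combination (k - 3) * h
      have hk0 : k ≠ 0 := by
        intro h; rw [h] at hk3; norm_num at hk3
      refine ⟨1, 1, 3 / k, by simp, ?_, ?_, ?_, ?_⟩
      · field_simp
        linear_combination -hk3
      · field_simp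
        ring
      · field_simp
        ring
      · field_simp
        linear_combination -hk3
  · -- part (b)
    constructor
    · rintro ⟨y, z, w, hne, hF, h1, h2, h3⟩
      have hd12 : (y - z) * (k * w - (y + z)) = 0 := by linear_combination h1 - h2
      have hd13 : (y - w) * (k * z - (y + w)) = 0 := by linear_combination h1 - h3
      -- helper: all equal forces k = 8
      have alleq : ∀ (u : ℂ), y = u → z = u → w = u → k = 8 := by
        intro u hyu hzu hwu
        rw [hyu, hzu, hwu] at h1
        have h8 : (k - 8) * u ^ 2 = 0 := by linear_combination -h1
        rcases mul_eq_zero.1 h8 with h | h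
        · linear_combination h
        · exact absurd (pow_eq_zero_iff (by norm_num) |>.1 h)
            (fun hu => hne (by simp [hyu, hzu, hwu, hu]))
      rcases mul_eq_zero.1 hd12 with e12 | f12
      · -- y = z
        have hyz : y = z := sub_eq_zero.1 e12
        rcases mul_eq_zero.1 hd13 with e13 | f13
        · -- y = w, so all equal
          have hyw : y = w := sub_eq_zero.1 e13
          exact Or.inr (Or.inr (alleq y rfl hyz.symm hyw.symm))
        · -- k*z = y + w, with y = z : k*y = y + w
          subst hyz
          have hw' : w = k * y - y := by linear_combination -f13
          subst hw'
          have h0 : 3 * k * y ^ 2 = 0 := by linear_combination h3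
          have hy0 : y ≠ 0 := by
            intro h; exact hne (by simp [h])
          have : k * (3 * y ^ 2) = 0 := by linear_combination h0
          rcases mul_eq_zero.1 this with h | h
          · exact Or.inr (Or.inl h)
          · exact absurd (pow_eq_zero_iff (n := 2) (by norm_num) |>.1
              (by linear_combination h / 3)) hy0
      · -- k*w = y + z
        have hyz' : y = k * w - z := by linear_combination -f12
        rcases mul_eq_zero.1 hd13 with e13 | f13
        · -- y = w
          have hyw : y = w := sub_eq_zero.1 e13
          subst hyw
          -- k*y = y + z, so z = k*y - y
          have hz' : z = k * y - y := by linear_combination -f12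
          subst hz'
          have h0 : 3 * k * y ^ 2 = 0 := by linear_combination h2
          have hy0 : y ≠ 0 := by
            intro h; exact hne (by simp [h])
          have : k * (3 * y ^ 2) = 0 := by linear_combination h0
          rcases mul_eq_zero.1 this with h | h
          · exact Or.inr (Or.inl h)
          · exact absurd (pow_eq_zero_iff (n := 2) (by norm_num) |>.1
              (by linear_combination h / 3)) hy0
        · -- k*z = y + w and k*w = y + z
          have key : (k + 1) * (z - w) = 0 := by linear_combination f13 - f12
          rcases mul_eq_zero.1 key with h | h
          · exact Or.inl (by linear_combination h)
          · -- z = w, with k*w = y + z : y = k*w - w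
            have hzw : z = w := sub_eq_zero.1 h
            subst hzw
            have hy' : y = k * z - z := by linear_combination -f12
            subst hy'
            have h0 : 3 * k * z ^ 2 = 0 := by linear_combination h1
            have hz0 : z ≠ 0 := by
              intro h'; exact hne (by simp [h'])
            have : k * (3 * z ^ 2) = 0 := by linear_combination h0
            rcases mul_eq_zero.1 this with h' | h'
            · exact Or.inr (Or.inl h')
            · exact absurd (pow_eq_zero_iff (n := 2) (by norm_num) |>.1
                (by linear_combination h' / 3)) hz0
    · intro hk
      rcases hk with h | h | h
      · -- k = -1 : singular point built from a primitive cube root of unity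
        subst h
        have hs : ((Real.sqrt 3 : ℝ) : ℂ) ^ 2 = 3 := by
          rw [← Complex.ofReal_pow]
          norm_cast
          exact Real.sq_sqrt (by norm_num)
        set ω : ℂ := (-1 + (Real.sqrt 3 : ℝ) * Complex.I) / 2 with hω_def
        have hω : ω ^ 2 + ω + 1 = 0 := by
          have he : ω ^ 2 + ω + 1 =
              (((Real.sqrt 3 : ℝ) : ℂ) ^ 2 * Complex.I ^ 2 + 3) / 4 := by
            rw [hω_def]; ring
          rw [he, hs, Complex.I_sq]; ring
        refine ⟨ω, 1, ω ^ 2, by simp, ?_, ?_, ?_, ?_⟩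
        · linear_combination (ω + ω ^ 2 + ω ^ 3) * hω
        · linear_combination (1 + ω + ω ^ 2) * hω
        · linear_combination (2 * ω + ω ^ 2) * hω
        · linear_combination (1 + 2 * ω) * hω
      · subst h
        exact ⟨-1, -1, 1, by simp, by ring, by ring, by ring, by ring⟩
      · subst h
        exact ⟨1, 1, 1, by simp, by ring, by ring, by ring, by ring⟩
end

section
/- Let k ∈ ℝ with k < −1 or k > 8. If y, z ∈ ℂ are nonzero, |y| = |z|, and (1+y)(1+z)(y+z) = k·yz, then z = conj(y) (the complex conjugate of y). -/
open Complex in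
lemma unit_case_bound (k a b : ℝ)
    (hcurve : (1 + Complex.exp (a*I)) * (1 + Complex.exp (b*I)) *
      (Complex.exp (a*I) + Complex.exp (b*I)) = (k:ℂ) * Complex.exp (a*I) * Complex.exp (b*I)) :
    -1 ≤ k ∧ k ≤ 8 := by
  have e1 : (1 : ℂ) + Complex.exp (a*I) = Complex.exp ((a:ℂ)/2*I) * (2 * Complex.cos ((a:ℂ)/2)) := by
    rw [Complex.two_cos, mul_add, ← Complex.exp_add, ← Complex.exp_add]
    rw [show (a:ℂ)/2*I + (a:ℂ)/2*I = (a:ℂ)*I by ring,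
      show (a:ℂ)/2*I + -((a:ℂ)/2)*I = 0 by ring, Complex.exp_zero, add_comm]
  have e2 : (1 : ℂ) + Complex.exp (b*I) = Complex.exp ((b:ℂ)/2*I) * (2 * Complex.cos ((b:ℂ)/2)) := by
    rw [Complex.two_cos, mul_add, ← Complex.exp_add, ← Complex.exp_add]
    rw [show (b:ℂ)/2*I + (b:ℂ)/2*I = (b:ℂ)*I by ring,
      show (b:ℂ)/2*I + -((b:ℂ)/2)*I = 0 by ring, Complex.exp_zero, add_comm]
  have e3 : Complex.exp (a*I) + Complex.exp (b*I)
      = Complex.exp (((a:ℂ)+(b:ℂ))/2*I) * (2 * Complex.cos (((a:ℂ)-(b:ℂ))/2)) := by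
    rw [Complex.two_cos, mul_add, ← Complex.exp_add, ← Complex.exp_add]
    rw [show ((a:ℂ)+(b:ℂ))/2*I + ((a:ℂ)-(b:ℂ))/2*I = (a:ℂ)*I by ring,
      show ((a:ℂ)+(b:ℂ))/2*I + -(((a:ℂ)-(b:ℂ))/2)*I = (b:ℂ)*I by ring]
  have hE : Complex.exp ((a:ℂ)*I) * Complex.exp ((b:ℂ)*I) ≠ 0 :=
    mul_ne_zero (Complex.exp_ne_zero _) (Complex.exp_ne_zero _)
  have hexp : Complex.exp ((a:ℂ)/2*I) * Complex.exp ((b:ℂ)/2*I) *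
      Complex.exp (((a:ℂ)+(b:ℂ))/2*I) = Complex.exp ((a:ℂ)*I) * Complex.exp ((b:ℂ)*I) := by
    rw [← Complex.exp_add, ← Complex.exp_add, ← Complex.exp_add]
    ring_nf
  have hkey : (8 * Complex.cos ((a:ℂ)/2) * Complex.cos ((b:ℂ)/2) *
      Complex.cos (((a:ℂ)-(b:ℂ))/2) : ℂ) = (k:ℂ) := by
    apply mul_right_cancel₀ hE
    calc (8 * Complex.cos ((a:ℂ)/2) * Complex.cos ((b:ℂ)/2) *
        Complex.cos (((a:ℂ)-(b:ℂ))/2) : ℂ) * (Complex.exp ((a:ℂ)*I) * Complex.exp ((b:ℂ)*I))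
        = (Complex.exp ((a:ℂ)/2*I) * (2 * Complex.cos ((a:ℂ)/2))) *
          (Complex.exp ((b:ℂ)/2*I) * (2 * Complex.cos ((b:ℂ)/2))) *
          (Complex.exp (((a:ℂ)+(b:ℂ))/2*I) * (2 * Complex.cos (((a:ℂ)-(b:ℂ))/2))) := by
            rw [← hexp]; ring
      _ = (k:ℂ) * Complex.exp (a*I) * Complex.exp (b*I) := by
            rw [← e1, ← e2, ← e3]; exact hcurve
      _ = (k:ℂ) * (Complex.exp ((a:ℂ)*I) * Complex.exp ((b:ℂ)*I)) := by ring
  have hkr : 8 * Real.cos (a/2) * Real.cos (b/2) * Real.cos ((a-b)/2) = k := by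
    exact_mod_cast hkey
  have hprod : Real.cos (a/2) * Real.cos (b/2)
      = (Real.cos ((a-b)/2) + Real.cos ((a+b)/2)) / 2 := by
    have h1 := Real.cos_add (a/2) (b/2)
    have h2 := Real.cos_sub (a/2) (b/2)
    rw [show (a-b)/2 = a/2 - b/2 by ring, show (a+b)/2 = a/2 + b/2 by ring]
    linarith
  set u := Real.cos ((a-b)/2) with hu
  set v := Real.cos ((a+b)/2) with hv
  have hk' : k = 4*u^2 + 4*u*v := by
    rw [← hkr, show 8 * Real.cos (a/2) * Real.cos (b/2) * u
      = 8 * (Real.cos (a/2) * Real.cos (b/2)) * u by ring, hprod]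
    ring
  have hu1 : u^2 ≤ 1 := by
    have := Real.neg_one_le_cos ((a-b)/2); have := Real.cos_le_one ((a-b)/2); nlinarith
  have hv1 : v^2 ≤ 1 := by
    have := Real.neg_one_le_cos ((a+b)/2); have := Real.cos_le_one ((a+b)/2); nlinarith
  constructor
  · nlinarith [sq_nonneg (2*u+v)]
  · nlinarith [sq_nonneg (u - v), sq_nonneg (u+v)]

/-- For real `k` with `k < -1` or `k > 8`, every point of the curve
`(1+y)(1+z)(y+z) = kyz` with `y, z ≠ 0` and `|y| = |z|` is an "imaginary point",
i.e. satisfies `z = conj y`. -/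
theorem imaginary_points_g (k : ℝ) (hk : k < -1 ∨ 8 < k) (y z : ℂ)
    (hy : y ≠ 0) (hz : z ≠ 0) (habs : ‖y‖ = ‖z‖)
    (hcurve : (1 + y) * (1 + z) * (y + z) = (k : ℂ) * y * z) :
    z = starRingEnd ℂ y := by
  have hk0 : (k : ℂ) ≠ 0 := by
    simp only [ne_eq, Complex.ofReal_eq_zero]
    rcases hk with h | h <;> intro h0 <;> rw [h0] at h <;> norm_num at h
  set N : ℂ := ((Complex.normSq y : ℝ) : ℂ) with hNdef
  have hNne : N ≠ 0 := by
    simp only [hNdef, ne_eq, Complex.ofReal_eq_zero, Complex.normSq_eq_zero]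
    exact hy
  have hNz : Complex.normSq z = Complex.normSq y := by
    rw [← Complex.sq_norm, ← Complex.sq_norm, habs]
  have hcy : (starRingEnd ℂ) y = N / y := by
    rw [eq_div_iff hy, mul_comm]; exact Complex.mul_conj y
  have hcz : (starRingEnd ℂ) z = N / z := by
    rw [eq_div_iff hz, mul_comm, Complex.mul_conj, hNz]
  have hconj := congrArg (starRingEnd ℂ) hcurve
  simp only [map_mul, map_add, map_one, Complex.conj_ofReal] at hconj
  rw [hcy, hcz] at hconj
  field_simp at hconj
  -- hconj : (y + N) * (z + N) * (N * z + N * y) * (y * z) = k * N * N * (y * z * (y * z))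
  have key0 : (y + z) * (1 - N) * (y*z - N) * (N * (y*z)) = 0 := by
    linear_combination (N*(y*z))*hconj - N^2*(y*z)*hcurve
  have key : (y + z) * (1 - N) * (y*z - N) = 0 := by
    have h2 : N * (y*z) ≠ 0 := mul_ne_zero hNne (mul_ne_zero hy hz)
    exact (mul_eq_zero.mp key0).resolve_right h2
  rcases mul_eq_zero.mp key with h | h
  · rcases mul_eq_zero.mp h with h | h
    · -- y + z = 0 : contradiction
      exfalso
      rw [h, mul_zero] at hcurve
      exact mul_ne_zero (mul_ne_zero hk0 hy) hz hcurve.symm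
    · -- N = 1 : unit circle case, contradiction with hk
      exfalso
      have hN1 : Complex.normSq y = 1 := by
        have hne : N = 1 := by linear_combination -h
        rw [hNdef] at hne
        exact_mod_cast hne
      have hay : ‖y‖ = 1 := by
        rw [Complex.norm_def, hN1, Real.sqrt_one]
      have haz : ‖z‖ = 1 := by rw [← habs, hay]
      have hy' : y = Complex.exp ((y.arg : ℂ) * Complex.I) := by
        have h0 := Complex.norm_mul_exp_arg_mul_I y
        rw [hay] at h0
        simpa using h0.symm
      have hz' : z = Complex.exp ((z.arg : ℂ) * Complex.I) := by
        have h0 := Complex.norm_mul_exp_arg_mul_I z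
        rw [haz] at h0
        simpa using h0.symm
      have hb := unit_case_bound k y.arg z.arg (by rw [← hy', ← hz']; exact hcurve)
      rcases hk with h' | h' <;> linarith [hb.1, hb.2]
  · -- y * z = N : conclude z = conj y
    have hyzN : y * z = N := by linear_combination h
    rw [hcy, ← hyzN, mul_comm, mul_div_assoc, div_self hy, mul_one]
end

section
/- Let k ∈ ℂ and let y, z ∈ ℂ satisfy y³ + z³ + 1 = k·yz. Then the point (X', Y') = (−yz, y³) satisfies Y'² + k·X'Y' + Y' = X'³; that is, (y,z) ↦ (−yz, y³) maps the curve y³ + z³ + 1 = kyz (in Deuring form D(k+6, k²+3k+9)) to the Deuring curve D(k, 1). -/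
/-- The degree-3 isogeny `ρ_k : D(k+6, k²+3k+9) → D(k, 1)` in the coordinates of
the cubic `y³ + z³ + 1 = kyz`: the point `(X', Y') = (-yz, y³)` satisfies the
Deuring equation `Y'² + kX'Y' + Y' = X'³`. -/
theorem isogeny_three_n (k y z : ℂ) (hcurve : y ^ 3 + z ^ 3 + 1 = k * y * z) :
    letI X' : ℂ := -(y * z)
    letI Y' : ℂ := y ^ 3
    Y' ^ 2 + k * X' * Y' + Y' = X' ^ 3 := by
  linear_combination y ^ 3 * hcurve
end

section
/- Let k ∈ ℂ and let (X, Y) ∈ ℂ² satisfy Y² + (k−2)·XY + k·Y = X³ with X ≠ −1. Set X' = X(X−k)/(X+1) and Y' = (Y + kX)(Y + X²)/(X+1)². Then Y'² + (−k−4)·X'Y' + (−k²)·Y' = X'³; that is, the map (X,Y) ↦ (X',Y') sends points of the Deuring curve D(k−2, k) to points of the Deuring curve D(−k−4, −k²). -/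
/-- The degree-2 isogeny `D(k-2, k) → D(-k-4, -k²)` with kernel generated by the
2-torsion point `Q = (-1, -1)`, in affine coordinates: if `(X, Y)` satisfies
`Y² + (k-2)XY + kY = X³` and `X ≠ -1`, then
`(X', Y') = (X(X-k)/(X+1), (Y+kX)(Y+X²)/(X+1)²)` satisfies
`Y'² + (-k-4)X'Y' + (-k²)Y' = X'³`. -/
theorem isogeny_two_g (k X Y : ℂ) (hcurve : Y ^ 2 + (k - 2) * X * Y + k * Y = X ^ 3)
    (hX : X ≠ -1) :
    letI X' : ℂ := X * (X - k) / (X + 1)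
    letI Y' : ℂ := (Y + k * X) * (Y + X ^ 2) / (X + 1) ^ 2
    Y' ^ 2 + (-k - 4) * X' * Y' + (-k ^ 2) * Y' = X' ^ 3 := by
  have h1 : X + 1 ≠ 0 := fun h => hX (by linear_combination h)
  field_simp
  linear_combination ((Y ^ 2 + 2 * X * Y + 2 * X ^ 2 * Y + X ^ 3 + X ^ 4
    - k * Y + k * X * Y + k * X ^ 2 + k * X ^ 3 - k ^ 2 * X)) * hcurve
end

section
/- Let K be a field of characteristic zero and ξ ∈ K a root of t³ − 2t² − t + 1. On the elliptic curve W : Y² − XY + Y = X³ over K (the Deuring curve D(−1,1), which is the curve 14A4), the point A = (ξ, ξ² − 1) lies on W, the point A has order exactly 9 in the group of points of W, and 3·A = P where P = (0,0). -/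
open WeierstrassCurve

private lemma some_congr {K : Type*} [Field K] {W : WeierstrassCurve.Affine K}
    {x₁ y₁ x₂ y₂ : K} (h₁ : W.Nonsingular x₁ y₁) (h₂ : W.Nonsingular x₂ y₂)
    (hx : x₁ = x₂) (hy : y₁ = y₂) :
    WeierstrassCurve.Affine.Point.some _ _ h₁ = WeierstrassCurve.Affine.Point.some _ _ h₂ := by
  subst hx; subst hy; rfl

open Classical in
/-- On the elliptic curve `14A4 : Y² - XY + Y = X³` (the Deuring curve `D(-1,1)`)
over a field `K` of characteristic zero, if `ξ` is a root of `t³ - 2t² - t + 1`,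
then `A = (ξ, ξ² - 1)` is a nonsingular point of the curve of order exactly `9`
with `3·A = P` where `P = (0,0)`. -/
theorem point_A_order_nine (K : Type*) [Field K] [CharZero K] (ξ : K)
    (hξ : ξ ^ 3 - 2 * ξ ^ 2 - ξ + 1 = 0) :
    letI W : WeierstrassCurve.Affine K := ⟨-1, 0, 1, 0, 0⟩
    W.Equation ξ (ξ ^ 2 - 1) ∧
    ∃ (hA : W.Nonsingular ξ (ξ ^ 2 - 1)) (hP : W.Nonsingular 0 0),
      addOrderOf (WeierstrassCurve.Affine.Point.some _ _ hA) = 9 ∧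
      (3 : ℤ) • (WeierstrassCurve.Affine.Point.some _ _ hA) =
        WeierstrassCurve.Affine.Point.some _ _ hP := by
  set W : WeierstrassCurve.Affine K := ⟨-1, 0, 1, 0, 0⟩ with hW
  have ha₁ : W.a₁ = -1 := rfl
  have ha₂ : W.a₂ = 0 := rfl
  have ha₃ : W.a₃ = 1 := rfl
  have ha₄ : W.a₄ = 0 := rfl
  have ha₆ : W.a₆ = 0 := rfl
  -- key nonvanishing facts
  have hq : 2 * ξ ^ 2 - ξ - 1 ≠ 0 := fun h => one_ne_zero (α := K) (by
    linear_combination (3/7 - 10/7*ξ) * hξ + (-4/7 - 9/7*ξ + 5/7*ξ^2) * h)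
  have hx12 : ξ ^ 2 - 3 * ξ ≠ 0 := fun h => one_ne_zero (α := K) (by
    linear_combination (1 - 2/7*ξ) * hξ + (-3/7 - 5/7*ξ + 2/7*ξ^2) * h)
  -- the points
  have heqA : W.Equation ξ (ξ ^ 2 - 1) := by
    rw [WeierstrassCurve.Affine.equation_iff, ha₁, ha₂, ha₃, ha₄, ha₆]
    linear_combination ξ * hξ
  have hndA : ξ ^ 2 - 1 ≠ W.negY ξ (ξ ^ 2 - 1) := by
    rw [WeierstrassCurve.Affine.negY, ha₁, ha₃]
    intro h
    exact hq (by linear_combination h)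
  have hA : W.Nonsingular ξ (ξ ^ 2 - 1) := by
    rw [WeierstrassCurve.Affine.nonsingular_iff, ha₁, ha₂, ha₃, ha₄]
    refine ⟨heqA, Or.inr ?_⟩
    intro h
    exact hq (by linear_combination h)
  have heqB : W.Equation (ξ ^ 2 - 2 * ξ) (ξ - 2) := by
    rw [WeierstrassCurve.Affine.equation_iff, ha₁, ha₂, ha₃, ha₄, ha₆]
    linear_combination (2 - 5*ξ + 4*ξ^2 - ξ^3) * hξ
  have hndB : ξ - 2 ≠ W.negY (ξ ^ 2 - 2 * ξ) (ξ - 2) := by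
    rw [WeierstrassCurve.Affine.negY, ha₁, ha₃]
    intro h
    exact one_ne_zero (α := K)
      (by linear_combination (-11/7 + 4/7*ξ) * hξ + (-6/7 - 3/7*ξ + 4/7*ξ^2) * h)
  have hB : W.Nonsingular (ξ ^ 2 - 2 * ξ) (ξ - 2) := by
    rw [WeierstrassCurve.Affine.nonsingular_iff, ha₁, ha₂, ha₃, ha₄]
    refine ⟨heqB, Or.inr ?_⟩
    intro h
    exact one_ne_zero (α := K)
      (by linear_combination (-11/7 + 4/7*ξ) * hξ + (-6/7 - 3/7*ξ + 4/7*ξ^2) * h)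
  have hP : W.Nonsingular 0 0 := by
    rw [WeierstrassCurve.Affine.nonsingular_iff, ha₁, ha₂, ha₃, ha₄]
    refine ⟨by rw [WeierstrassCurve.Affine.equation_iff, ha₁, ha₂, ha₃, ha₄, ha₆]; ring,
      Or.inr (by norm_num)⟩
  -- slopes
  have hs1 : W.slope ξ ξ (ξ ^ 2 - 1) (ξ ^ 2 - 1) = ξ ^ 2 - ξ := by
    rw [WeierstrassCurve.Affine.slope_of_Y_ne rfl hndA, WeierstrassCurve.Affine.negY,
      ha₁, ha₂, ha₃, ha₄]
    rw [div_eq_iff (by intro h; exact hq (by linear_combination h))]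
    linear_combination (-1 - 2*ξ) * hξ
  -- A + A = B
  have hAA : WeierstrassCurve.Affine.Point.some _ _ hA + WeierstrassCurve.Affine.Point.some _ _ hA
      = WeierstrassCurve.Affine.Point.some _ _ hB := by
    rw [WeierstrassCurve.Affine.Point.add_self_of_Y_ne hndA]
    refine some_congr _ _ ?_ ?_
    · rw [WeierstrassCurve.Affine.addX, hs1, ha₁, ha₂]
      linear_combination ξ * hξ
    · rw [WeierstrassCurve.Affine.addY, WeierstrassCurve.Affine.negAddY,
        WeierstrassCurve.Affine.addX, WeierstrassCurve.Affine.negY, hs1, ha₁, ha₂, ha₃]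
      linear_combination (2 + ξ^2 - ξ^3) * hξ
  -- x-coordinates of A and B differ
  have hxAB : ξ ≠ ξ ^ 2 - 2 * ξ := by
    intro h; exact hx12 (by linear_combination -h)
  have hs2 : W.slope ξ (ξ ^ 2 - 2 * ξ) (ξ ^ 2 - 1) (ξ - 2) = ξ := by
    rw [WeierstrassCurve.Affine.slope_of_X_ne hxAB,
      div_eq_iff (sub_ne_zero.mpr hxAB)]
    linear_combination hξ
  -- A + B = P
  have hAB : WeierstrassCurve.Affine.Point.some _ _ hA + WeierstrassCurve.Affine.Point.some _ _ hB
      = WeierstrassCurve.Affine.Point.some _ _ hP := by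
    rw [WeierstrassCurve.Affine.Point.add_of_X_ne hxAB]
    refine some_congr _ _ ?_ ?_
    · rw [WeierstrassCurve.Affine.addX, hs2, ha₁, ha₂]; ring
    · rw [WeierstrassCurve.Affine.addY, WeierstrassCurve.Affine.negAddY,
        WeierstrassCurve.Affine.addX, WeierstrassCurve.Affine.negY, hs2, ha₁, ha₂, ha₃]
      ring
  have hBA : WeierstrassCurve.Affine.Point.some _ _ hB + WeierstrassCurve.Affine.Point.some _ _ hA
      = WeierstrassCurve.Affine.Point.some _ _ hP := by rw [add_comm]; exact hAB
  have h3A : (3 : ℕ) • WeierstrassCurve.Affine.Point.some _ _ hA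
      = WeierstrassCurve.Affine.Point.some _ _ hP := by
    rw [show (3:ℕ) = 2 + 1 by rfl, add_smul, two_smul, one_smul, hAA, hBA]
  -- P has order 3 : compute P + P = (0, -1) and then P + (0,-1) = 0
  have hndP : (0 : K) ≠ W.negY 0 0 := by
    rw [WeierstrassCurve.Affine.negY, ha₁, ha₃]; norm_num
  have hsP : W.slope 0 0 0 0 = 0 := by
    rw [WeierstrassCurve.Affine.slope_of_Y_ne rfl hndP, WeierstrassCurve.Affine.negY,
      ha₁, ha₂, ha₃, ha₄]
    norm_num
  have hQ : W.Nonsingular 0 (-1) := by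
    rw [WeierstrassCurve.Affine.nonsingular_iff, ha₁, ha₂, ha₃, ha₄]
    refine ⟨by rw [WeierstrassCurve.Affine.equation_iff, ha₁, ha₂, ha₃, ha₄, ha₆]; ring,
      Or.inr (by norm_num)⟩
  have hPP : WeierstrassCurve.Affine.Point.some _ _ hP + WeierstrassCurve.Affine.Point.some _ _ hP
      = WeierstrassCurve.Affine.Point.some _ _ hQ := by
    rw [WeierstrassCurve.Affine.Point.add_self_of_Y_ne hndP]
    refine some_congr _ _ ?_ ?_
    · rw [WeierstrassCurve.Affine.addX, hsP, ha₁, ha₂]; ring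
    · rw [WeierstrassCurve.Affine.addY, WeierstrassCurve.Affine.negAddY,
        WeierstrassCurve.Affine.addX, WeierstrassCurve.Affine.negY, hsP, ha₁, ha₂, ha₃]
      ring
  have hPQ : WeierstrassCurve.Affine.Point.some _ _ hP + WeierstrassCurve.Affine.Point.some _ _ hQ
      = 0 := by
    refine WeierstrassCurve.Affine.Point.add_of_Y_eq rfl ?_
    rw [WeierstrassCurve.Affine.negY, ha₁, ha₃]; ring
  have hQP : WeierstrassCurve.Affine.Point.some _ _ hQ + WeierstrassCurve.Affine.Point.some _ _ hP
      = 0 := by rw [add_comm]; exact hPQ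
  have h3P : (3 : ℕ) • WeierstrassCurve.Affine.Point.some _ _ hP = 0 := by
    rw [show (3:ℕ) = 2 + 1 by rfl, add_smul, two_smul, one_smul, hPP, hQP]
  have h9A : (3 : ℕ) ^ 2 • WeierstrassCurve.Affine.Point.some _ _ hA = 0 := by
    rw [pow_two, mul_smul, h3A, h3P]
  have h3Ane : ¬ (3 : ℕ) ^ 1 • WeierstrassCurve.Affine.Point.some _ _ hA = 0 := by
    rw [pow_one, h3A]
    intro h
    simp at h
  refine ⟨heqA, hA, hP, ?_, ?_⟩
  · haveI : Fact (Nat.Prime 3) := ⟨by norm_num⟩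
    have := addOrderOf_eq_prime_pow (x := WeierstrassCurve.Affine.Point.some _ _ hA)
      (p := 3) (n := 1) h3Ane h9A
    simpa using this
  · have h' : ((3 : ℕ) : ℤ) • WeierstrassCurve.Affine.Point.some _ _ hA =
        WeierstrassCurve.Affine.Point.some _ _ hP := by rw [natCast_zsmul]; exact h3A
    exact_mod_cast h'
end

section
/- Let a, b ∈ ℂ with 4a³ + 27b² ≠ 0 and let E : y² = x³ + ax + b. Let p ∈ E(ℂ) be a point of order exactly 3, and let r₁, r₂ be two distinct points of order exactly 2. Then the tangent line to E at p is parallel to the line through 2p + r₁ and 2p + r₂; that is, (3x(p)² + a)/(2y(p)) = (y(2p + r₂) − y(2p + r₁))/(x(2p + r₂) − x(2p + r₁)), where the points 2p + r₁ and 2p + r₂ are distinct with distinct x-coordinates, and x(·), y(·) denote coordinates and addition is the elliptic curve group law. -/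
private lemma core_identity (a x0 y0 e1 e2 L1 L2 : ℂ)
    (hg1 : L1 * (e1 - x0) = y0) (hg2 : L2 * (e2 - x0) = y0)
    (hg3 : y0 ^ 2 + (e1 ^ 3 + a * e1 - x0 ^ 3 - a * x0) = 0)
    (hg4 : y0 ^ 2 + (e2 ^ 3 + a * e2 - x0 ^ 3 - a * x0) = 0)
    (hg5 : (3 * x0 ^ 2 + a) ^ 2 - 12 * x0 * y0 ^ 2 = 0) :
    ((-(L2 * ((L2 ^ 2 - x0 - e2) - x0) - y0) - -(L1 * ((L1 ^ 2 - x0 - e1) - x0) - y0)) * (2 * y0)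
      - (3 * x0 ^ 2 + a) * ((L2 ^ 2 - x0 - e2) - (L1 ^ 2 - x0 - e1)))
      * ((e1 - x0) ^ 3 * (e2 - x0) ^ 3) = 0 := by
  linear_combination (-3*L1*x0^7 + -2*L1^2*x0^5*y0 + 6*L1*x0^6*e1 + 4*L1^2*x0^4*y0*e1 + -3*L1*x0^5*e1^2 + -2*L1^2*x0^3*y0*e1^2 + 9*L1*x0^6*e2 + 6*L1^2*x0^4*y0*e2 + -18*L1*x0^5*e1*e2 + -12*L1^2*x0^3*y0*e1*e2 + 9*L1*x0^4*e1^2*e2 + 6*L1^2*x0^2*y0*e1^2*e2 + -9*L1*x0^5*e2^2 + -6*L1^2*x0^3*y0*e2^2 + 18*L1*x0^4*e1*e2^2 + 12*L1^2*x0^2*y0*e1*e2^2 + -9*L1*x0^3*e1^2*e2^2 + -6*L1^2*x0*y0*e1^2*e2^2 + 3*L1*x0^4*e2^3 + 2*L1^2*x0^2*y0*e2^3 + -6*L1*x0^3*e1*e2^3 + -4*L1^2*x0*y0*e1*e2^3 + 3*L1*x0^2*e1^2*e2^3 + 2*L1^2*y0*e1^2*e2^3 + 7*x0^6*y0 + 2*L1*x0^4*y0^2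 + -9*x0^5*y0*e1 + -2*L1*x0^3*y0^2*e1 + 2*x0^3*y0*e1^3 + -21*x0^5*y0*e2 + -6*L1*x0^3*y0^2*e2 + 27*x0^4*y0*e1*e2 + 6*L1*x0^2*y0^2*e1*e2 + -6*x0^2*y0*e1^3*e2 + 21*x0^4*y0*e2^2 + 6*L1*x0^2*y0^2*e2^2 + -27*x0^3*y0*e1*e2^2 + -6*L1*x0*y0^2*e1*e2^2 + 6*x0*y0*e1^3*e2^2 + -7*x0^3*y0*e2^3 + -2*L1*x0*y0^2*e2^3 + 9*x0^2*y0*e1*e2^3 + 2*L1*y0^2*e1*e2^3 + -2*y0*e1^3*e2^3 + -1*L1*x0^5*a + 2*L1*x0^4*e1*a + -1*L1*x0^3*e1^2*a + 3*L1*x0^4*e2*a + -6*L1*x0^3*e1*e2*a + 3*L1*x0^2*e1^2*e2*a + -3*L1*x0^3*e2^2*a + 6*L1*x0^2*e1*e2^2*a + -3*L1*x0*e1^2*e2^2*a + L1*x0^2*e2^3*a + -2*L1*x0*e1*e2^3*a + L1*e1^2*e2^3*a + -2*x0^3*y0^3 + 6*x0^2*y0^3*e2 + -6*x0*y0^3*e2^2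 + 2*y0^3*e2^3 + x0^4*y0*a + -1*x0^3*y0*e1*a + -3*x0^3*y0*e2*a + 3*x0^2*y0*e1*e2*a + 3*x0^2*y0*e2^2*a + -3*x0*y0*e1*e2^2*a + -1*x0*y0*e2^3*a + y0*e1*e2^3*a) * hg1 + (3*L2*x0^7 + 2*L2^2*x0^5*y0 + -9*L2*x0^6*e1 + -6*L2^2*x0^4*y0*e1 + 9*L2*x0^5*e1^2 + 6*L2^2*x0^3*y0*e1^2 + -3*L2*x0^4*e1^3 + -2*L2^2*x0^2*y0*e1^3 + -6*L2*x0^6*e2 + -4*L2^2*x0^4*y0*e2 + 18*L2*x0^5*e1*e2 + 12*L2^2*x0^3*y0*e1*e2 + -18*L2*x0^4*e1^2*e2 + -12*L2^2*x0^2*y0*e1^2*e2 + 6*L2*x0^3*e1^3*e2 + 4*L2^2*x0*y0*e1^3*e2 + 3*L2*x0^5*e2^2 + 2*L2^2*x0^3*y0*e2^2 + -9*L2*x0^4*e1*e2^2 + -6*L2^2*x0^2*y0*e1*e2^2 + 9*L2*x0^3*e1^2*e2^2 + 6*L2^2*x0*y0*e1^2*e2^2 + -3*L2*x0^2*e1^3*e2^2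 + -2*L2^2*y0*e1^3*e2^2 + -7*x0^6*y0 + -2*L2*x0^4*y0^2 + 21*x0^5*y0*e1 + 6*L2*x0^3*y0^2*e1 + -21*x0^4*y0*e1^2 + -6*L2*x0^2*y0^2*e1^2 + 7*x0^3*y0*e1^3 + 2*L2*x0*y0^2*e1^3 + 9*x0^5*y0*e2 + 2*L2*x0^3*y0^2*e2 + -27*x0^4*y0*e1*e2 + -6*L2*x0^2*y0^2*e1*e2 + 27*x0^3*y0*e1^2*e2 + 6*L2*x0*y0^2*e1^2*e2 + -9*x0^2*y0*e1^3*e2 + -2*L2*y0^2*e1^3*e2 + -2*x0^3*y0*e2^3 + 6*x0^2*y0*e1*e2^3 + -6*x0*y0*e1^2*e2^3 + 2*y0*e1^3*e2^3 + L2*x0^5*a + -3*L2*x0^4*e1*a + 3*L2*x0^3*e1^2*a + -1*L2*x0^2*e1^3*a + -2*L2*x0^4*e2*a + 6*L2*x0^3*e1*e2*a + -6*L2*x0^2*e1^2*e2*a + 2*L2*x0*e1^3*e2*a + L2*x0^3*e2^2*a + -3*L2*x0^2*e1*e2^2*a + 3*L2*x0*e1^2*e2^2*a + -1*L2*e1^3*e2^2*a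 + 2*x0^3*y0^3 + -6*x0^2*y0^3*e1 + 6*x0*y0^3*e1^2 + -2*y0^3*e1^3 + -1*x0^4*y0*a + 3*x0^3*y0*e1*a + -3*x0^2*y0*e1^2*a + x0*y0*e1^3*a + x0^3*y0*e2*a + -3*x0^2*y0*e1*e2*a + 3*x0*y0*e1^2*e2*a + -1*y0*e1^3*e2*a) * hg2 + (-2*x0^6 + 3*x0^5*e1 + -3*x0^4*e1^2 + 2*x0^3*e1^3 + 9*x0^5*e2 + -9*x0^4*e1*e2 + -9*x0^4*e2^2 + 9*x0^3*e1*e2^2 + -7*x0^3*e2^3 + 15*x0^2*e1*e2^3 + -6*x0*e1^2*e2^3 + -2*e1^3*e2^3 + -6*x0^2*y0^2*e1 + 6*x0*y0^2*e1^2 + -2*y0^2*e1^3 + 6*x0^2*y0^2*e2 + -6*x0*y0^2*e2^2 + 2*y0^2*e2^3 + 3*x0^4*a + -5*x0^3*e1*a + 2*x0*e1^3*a + -7*x0^3*e2*a + 15*x0^2*e1*e2*a + -6*x0*e1^2*e2*a + -2*e1^3*e2*a + -3*x0^2*e2^2*a + 3*x0*e1*e2^2*a + x0*e2^3*a + -1*e1*e2^3*a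 + -1*x0^2*a^2 + 2*x0*e1*a^2 + -1*e1^2*a^2) * hg3 + (2*x0^6 + -9*x0^5*e1 + 12*x0^4*e1^2 + 5*x0^3*e1^3 + -18*x0^2*e1^4 + 6*x0*e1^5 + 2*e1^6 + -3*x0^5*e2 + 9*x0^4*e1*e2 + -9*x0^3*e1^2*e2 + 3*x0^2*e1^3*e2 + -3*x0^4*a + 13*x0^3*e1*a + -15*x0^2*e1^2*a + 3*x0*e1^3*a + 2*e1^4*a + -1*x0^3*e2*a + 3*x0^2*e1*e2*a + -3*x0*e1^2*e2*a + e1^3*e2*a + x0^2*a^2 + -2*x0*e1*a^2 + e1^2*a^2) * hg4 + (-1*x0^4*e1 + 2*x0^3*e1^2 + -2*x0*e1^4 + e1^5 + x0^4*e2 + -3*x0^2*e1^2*e2 + 2*x0*e1^3*e2 + -2*x0^3*e2^2 + 3*x0^2*e1*e2^2 + -1*e1^3*e2^2 + x0^2*e1*a + -2*x0*e1^2*a + e1^3*a + -1*x0^2*e2*a + 2*x0*e1*e2*a + -1*e1^2*e2*a) * hg5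

open WeierstrassCurve.Affine WeierstrassCurve.Affine.Point in
private lemma some_eq_some {F : Type*} [Field F] {W : WeierstrassCurve.Affine F}
    {x1 y1 x2 y2 : F} (h1 : W.Nonsingular x1 y1) (h2 : W.Nonsingular x2 y2)
    (hx : x1 = x2) (hy : y1 = y2) : Point.some _ _ h1 = Point.some _ _ h2 := by
  subst hx; subst hy; rfl

/-- The affine Weierstrass curve `y² = x³ + ax + b`. -/
def Wab (a b : ℂ) : WeierstrassCurve.Affine ℂ := ⟨0, 0, 0, a, b⟩

/-- The `x`-coordinate of a nonsingular affine point (junk value `0` at infinity). -/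
noncomputable def ptx {F : Type*} [Field F] {W : WeierstrassCurve.Affine F} : W.Point → F
  | .zero => 0
  | .some (x := x) _ _ => x

/-- The `y`-coordinate of a nonsingular affine point (junk value `0` at infinity). -/
noncomputable def pty {F : Type*} [Field F] {W : WeierstrassCurve.Affine F} : W.Point → F
  | .zero => 0
  | .some (y := y) _ _ => y

@[simp] private lemma ptx_some {F : Type*} [Field F] {W : WeierstrassCurve.Affine F}
    {x y : F} (h : W.Nonsingular x y) : ptx (WeierstrassCurve.Affine.Point.some _ _ h) = x := rfl

@[simp] private lemma pty_some {F : Type*} [Field F] {W : WeierstrassCurve.Affine F}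
    {x y : F} (h : W.Nonsingular x y) : pty (WeierstrassCurve.Affine.Point.some _ _ h) = y := rfl

open WeierstrassCurve.Affine WeierstrassCurve.Affine.Point in
/-- On `E : y² = x³ + ax + b`, if `p` has order exactly `3` and `r₁ ≠ r₂` have
order exactly `2`, then the points `2p + r₁` and `2p + r₂` are distinct with
distinct `x`-coordinates, and the tangent line to `E` at `p` is parallel to the
line through `2p + r₁` and `2p + r₂`: the tangent slope `(3x(p)² + a)/(2y(p))`
equals the chord slope of `2p + r₁`, `2p + r₂`. -/
theorem tangent_parallel_two_torsion_chord (a b : ℂ) (hD : 4 * a ^ 3 + 27 * b ^ 2 ≠ 0)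
    (p r₁ r₂ : (Wab a b).Point)
    (hp : addOrderOf p = 3) (hr₁ : addOrderOf r₁ = 2) (hr₂ : addOrderOf r₂ = 2)
    (hne : r₁ ≠ r₂) :
    (2 : ℤ) • p + r₁ ≠ (2 : ℤ) • p + r₂ ∧
    ptx ((2 : ℤ) • p + r₁) ≠ ptx ((2 : ℤ) • p + r₂) ∧
    (3 * ptx p ^ 2 + a) / (2 * pty p) =
      (pty ((2 : ℤ) • p + r₂) - pty ((2 : ℤ) • p + r₁)) /
        (ptx ((2 : ℤ) • p + r₂) - ptx ((2 : ℤ) • p + r₁)) := by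
  -- destructure the points
  obtain ⟨x0, y0, hpn, rfl⟩ : ∃ x y h, p = Point.some (W' := Wab a b) x y h := by
    cases p with
    | zero => rw [← zero_def] at hp; simp at hp
    | some _ _ h => exact ⟨_, _, h, rfl⟩
  obtain ⟨e1, f1, hr1n, rfl⟩ : ∃ x y h, r₁ = Point.some (W' := Wab a b) x y h := by
    cases r₁ with
    | zero => rw [← zero_def] at hr₁; simp at hr₁
    | some _ _ h => exact ⟨_, _, h, rfl⟩
  obtain ⟨e2, f2, hr2n, rfl⟩ : ∃ x y h, r₂ = Point.some (W' := Wab a b) x y h := by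
    cases r₂ with
    | zero => rw [← zero_def] at hr₂; simp at hr₂
    | some _ _ h => exact ⟨_, _, h, rfl⟩
  -- basic torsion facts
  have hp0 : Point.some _ _ hpn ≠ 0 := some_ne_zero hpn
  have hp3 : Point.some _ _ hpn + Point.some _ _ hpn + Point.some _ _ hpn = 0 := by
    have h := addOrderOf_nsmul_eq_zero (Point.some _ _ hpn)
    rw [hp, show (3 : ℕ) = 2 + 1 by rfl, add_nsmul, two_nsmul, one_nsmul] at h
    exact h
  have h2p : Point.some _ _ hpn + Point.some _ _ hpn = -Point.some _ _ hpn :=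
    eq_neg_of_add_eq_zero_left hp3
  have hr1t : Point.some _ _ hr1n + Point.some _ _ hr1n = 0 := by
    have h := addOrderOf_nsmul_eq_zero (Point.some _ _ hr1n)
    rwa [hr₁, two_nsmul] at h
  have hr2t : Point.some _ _ hr2n + Point.some _ _ hr2n = 0 := by
    have h := addOrderOf_nsmul_eq_zero (Point.some _ _ hr2n)
    rwa [hr₂, two_nsmul] at h
  -- y-coordinates of 2-torsion vanish
  have hf1 : f1 = 0 := by
    by_contra hf
    have hy : f1 ≠ (Wab a b).negY e1 f1 := by
      simp only [WeierstrassCurve.Affine.negY, Wab]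
      intro h; exact hf (by linear_combination h / 2)
    have h := add_self_of_Y_ne (h₁ := hr1n) hy
    rw [hr1t] at h
    exact some_ne_zero _ h.symm
  have hf2 : f2 = 0 := by
    by_contra hf
    have hy : f2 ≠ (Wab a b).negY e2 f2 := by
      simp only [WeierstrassCurve.Affine.negY, Wab]
      intro h; exact hf (by linear_combination h / 2)
    have h := add_self_of_Y_ne (h₁ := hr2n) hy
    rw [hr2t] at h
    exact some_ne_zero _ h.symm
  subst hf1; subst hf2
  -- curve equations
  have hpe : y0 ^ 2 = x0 ^ 3 + a * x0 + b := by
    have h := hpn.1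
    rw [WeierstrassCurve.Affine.equation_iff] at h
    simp only [Wab] at h
    linear_combination h
  have he1 : e1 ^ 3 + a * e1 + b = 0 := by
    have h := hr1n.1
    rw [WeierstrassCurve.Affine.equation_iff] at h
    simp only [Wab] at h
    linear_combination -h
  have he2 : e2 ^ 3 + a * e2 + b = 0 := by
    have h := hr2n.1
    rw [WeierstrassCurve.Affine.equation_iff] at h
    simp only [Wab] at h
    linear_combination -h
  -- y0 ≠ 0
  have hy0 : y0 ≠ 0 := by
    intro h
    have hy : y0 = (Wab a b).negY x0 y0 := by
      simp only [WeierstrassCurve.Affine.negY, Wab]; rw [h]; ring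
    have hdbl := add_self_of_Y_eq (h₁ := hpn) hy
    have h2t : (2 : ℕ) • Point.some _ _ hpn = 0 := by rw [two_nsmul]; exact hdbl
    have hdvd := addOrderOf_dvd_of_nsmul_eq_zero h2t
    rw [hp] at hdvd
    norm_num at hdvd
  -- x0 differs from the 2-torsion x's
  have hx0e1 : x0 ≠ e1 := by
    intro h
    subst h
    exact hy0 (pow_eq_zero_iff two_ne_zero |>.mp (hpe.trans he1))
  have hx0e2 : x0 ≠ e2 := by
    intro h
    subst h
    exact hy0 (pow_eq_zero_iff two_ne_zero |>.mp (hpe.trans he2))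
  have he12 : e1 ≠ e2 := by
    intro h; subst h; exact hne rfl
  -- the tangent (3-torsion) relation
  have hyne : y0 ≠ (Wab a b).negY x0 y0 := by
    simp only [WeierstrassCurve.Affine.negY, Wab]
    intro h; exact hy0 (by linear_combination h / 2)
  have hP : (3 * x0 ^ 2 + a) ^ 2 - 12 * x0 * y0 ^ 2 = 0 := by
    have hdbl := add_self_of_Y_ne (h₁ := hpn) hyne
    rw [h2p, neg_some] at hdbl
    have hx := congrArg ptx hdbl
    rw [ptx_some, ptx_some] at hx
    rw [slope_of_Y_ne rfl hyne] at hx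
    simp only [WeierstrassCurve.Affine.addX, WeierstrassCurve.Affine.negY, Wab] at hx
    have hyy : y0 + y0 ≠ 0 := by
      intro h; exact hy0 (by linear_combination h / 2)
    field_simp [hyy] at hx
    linear_combination -hx
  -- coordinates of -p
  set Y0 := (Wab a b).negY x0 y0 with hY0def
  have hY0 : Y0 = -y0 := by simp only [hY0def, WeierstrassCurve.Affine.negY, Wab]; ring
  -- the two sum points
  set L1 := (Wab a b).slope x0 e1 Y0 0 with hL1def
  set L2 := (Wab a b).slope x0 e2 Y0 0 with hL2def
  have hq1 : (2 : ℤ) • Point.some _ _ hpn + Point.some _ _ hr1n =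
      Point.some _ _ (nonsingular_add (((nonsingular_neg ..).mpr hpn)) hr1n (fun h => (hx0e1 h.1).elim)) := by
    rw [two_zsmul, h2p, neg_some]
    exact add_of_X_ne hx0e1
  have hq2 : (2 : ℤ) • Point.some _ _ hpn + Point.some _ _ hr2n =
      Point.some _ _ (nonsingular_add (((nonsingular_neg ..).mpr hpn)) hr2n (fun h => (hx0e2 h.1).elim)) := by
    rw [two_zsmul, h2p, neg_some]
    exact add_of_X_ne hx0e2
  -- slope equations
  have hg1 : L1 * (e1 - x0) = y0 := by
    rw [hL1def, slope_of_X_ne hx0e1, hY0]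
    field_simp [sub_ne_zero.mpr hx0e1]
    ring
  have hg2 : L2 * (e2 - x0) = y0 := by
    rw [hL2def, slope_of_X_ne hx0e2, hY0]
    field_simp [sub_ne_zero.mpr hx0e2]
    ring
  -- coordinates of the sum points
  have hX1 : (Wab a b).addX x0 e1 L1 = L1 ^ 2 - x0 - e1 := by
    simp only [WeierstrassCurve.Affine.addX, Wab]; ring
  have hX2 : (Wab a b).addX x0 e2 L2 = L2 ^ 2 - x0 - e2 := by
    simp only [WeierstrassCurve.Affine.addX, Wab]; ring
  have hY1 : (Wab a b).addY x0 e1 Y0 L1 = -(L1 * ((L1 ^ 2 - x0 - e1) - x0) - y0) := by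
    simp only [WeierstrassCurve.Affine.addY, WeierstrassCurve.Affine.negAddY, hX1]
    simp only [WeierstrassCurve.Affine.negY, Wab, hY0]
    ring
  have hY2 : (Wab a b).addY x0 e2 Y0 L2 = -(L2 * ((L2 ^ 2 - x0 - e2) - x0) - y0) := by
    simp only [WeierstrassCurve.Affine.addY, WeierstrassCurve.Affine.negAddY, hX2]
    simp only [WeierstrassCurve.Affine.negY, Wab, hY0]
    ring
  -- algebraic relations for the core identity
  have hg3 : y0 ^ 2 + (e1 ^ 3 + a * e1 - x0 ^ 3 - a * x0) = 0 := by
    linear_combination hpe + he1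
  have hg4 : y0 ^ 2 + (e2 ^ 3 + a * e2 - x0 ^ 3 - a * x0) = 0 := by
    linear_combination hpe + he2
  have hcore := core_identity a x0 y0 e1 e2 L1 L2 hg1 hg2 hg3 hg4 hP
  have hu1 : e1 - x0 ≠ 0 := sub_ne_zero.mpr (Ne.symm hx0e1)
  have hu2 : e2 - x0 ≠ 0 := sub_ne_zero.mpr (Ne.symm hx0e2)
  have hdiff : (-(L2 * ((L2 ^ 2 - x0 - e2) - x0) - y0) - -(L1 * ((L1 ^ 2 - x0 - e1) - x0) - y0))
        * (2 * y0) - (3 * x0 ^ 2 + a) * ((L2 ^ 2 - x0 - e2) - (L1 ^ 2 - x0 - e1)) = 0 :=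
    (mul_eq_zero.mp hcore).resolve_right
      (mul_ne_zero (pow_ne_zero _ hu1) (pow_ne_zero _ hu2))
  -- distinctness of the x-coordinates
  have hXne : (L1 ^ 2 - x0 - e1) ≠ (L2 ^ 2 - x0 - e2) := by
    intro hXeq
    have hq1n := nonsingular_add (((nonsingular_neg ..).mpr hpn)) hr1n (fun h => (hx0e1 h.1).elim)
    have hq2n := nonsingular_add (((nonsingular_neg ..).mpr hpn)) hr2n (fun h => (hx0e2 h.1).elim)
    have hXeq' : (Wab a b).addX x0 e1 L1 = (Wab a b).addX x0 e2 L2 := by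
      rw [hX1, hX2, hXeq]
    have hcases := Y_eq_of_X_eq hq1n.1 hq2n.1 hXeq'
    have hsum : ((2 : ℤ) • Point.some _ _ hpn + Point.some _ _ hr1n) +
        ((2 : ℤ) • Point.some _ _ hpn + Point.some _ _ hr2n) = 0 := by
      rw [hq1, hq2]
      rcases hcases with h | h
      · exact absurd (add_left_cancel
          (hq1.trans ((some_eq_some hq1n hq2n hXeq' h).trans hq2.symm))) hne
      · rw [some_eq_some hq1n (((nonsingular_neg ..).mpr hq2n)) hXeq' h, ← neg_some]
        exact neg_add_cancel _
    -- from hsum derive p = 0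
    have h5 : Point.some _ _ hpn + (Point.some _ _ hr1n + Point.some _ _ hr2n) = 0 := by
      have hre : ((2 : ℤ) • Point.some _ _ hpn + Point.some _ _ hr1n) +
          ((2 : ℤ) • Point.some _ _ hpn + Point.some _ _ hr2n) =
          (Point.some _ _ hpn + Point.some _ _ hpn + Point.some _ _ hpn) +
            (Point.some _ _ hpn + (Point.some _ _ hr1n + Point.some _ _ hr2n)) := by
        rw [two_zsmul]; abel
      rw [hre, hp3, zero_add] at hsum
      exact hsum
    have h6 : Point.some _ _ hpn + Point.some _ _ hpn = 0 := by
      have : Point.some _ _ hpn + Point.some _ _ hpn =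
          (Point.some _ _ hpn + (Point.some _ _ hr1n + Point.some _ _ hr2n)) +
          (Point.some _ _ hpn + (Point.some _ _ hr1n + Point.some _ _ hr2n)) -
          (Point.some _ _ hr1n + Point.some _ _ hr1n) - (Point.some _ _ hr2n + Point.some _ _ hr2n) := by
        abel
      rw [h5, hr1t, hr2t] at this
      simpa using this
    have : Point.some _ _ hpn = 0 := by
      have h7 : Point.some _ _ hpn = (Point.some _ _ hpn + Point.some _ _ hpn + Point.some _ _ hpn) -
          (Point.some _ _ hpn + Point.some _ _ hpn) := by abel
      rw [hp3, h6, sub_zero] at h7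
      exact h7
    exact hp0 this
  refine ⟨fun h => hne (add_left_cancel h), ?_, ?_⟩
  · rw [hq1, hq2, ptx_some, ptx_some, hX1, hX2]
    exact hXne
  · rw [hq1, hq2, ptx_some, ptx_some, pty_some, pty_some, ptx_some, pty_some,
      hX1, hX2, hY1, hY2]
    rw [div_eq_div_iff (by simpa using hy0) (sub_ne_zero.mpr (Ne.symm hXne))]
    linear_combination -hdiff
end

section
/- Let a, p ∈ ℂ. In the ring of formal power series ℂ[[T]], consider the power series (all well-defined since each factor has constant term 1): F = (1 − aT + pT²)⁻¹, G = ((1 − T)(1 − pT))⁻¹, H = (1 − p²T²)·((1 − aT + pT²)(1 − paT + p³T²))⁻¹, F' = (1 − aT)⁻¹, G' = ((1 − aT)(1 − paT))⁻¹. Then for every n ≥ 0: (i) coeff_n(F)·coeff_n(G) = coeff_n(H); (ii) coeff_n(F')·coeff_n(G) = coeff_n(G'); (iii) coeff_n(F')·coeff_n(T·G) = coeff_n(aT·G'). -/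
open PowerSeries

namespace EulerConv

variable (a p : ℂ)

noncomputable def cc : ℕ → ℂ
  | 0 => 1
  | 1 => a
  | (n+2) => a * cc (n+1) - p * cc n

noncomputable def dd : ℕ → ℂ
  | 0 => 1
  | (n+1) => p * dd n + 1

lemma coeff_C_Xpow_mul (q : ℂ) (k n : ℕ) (f : PowerSeries ℂ) :
    coeff n (C q * X ^ k * f) = if k ≤ n then q * coeff (n - k) f else 0 := by
  rw [mul_assoc, coeff_C_mul, coeff_X_pow_mul']
  split <;> simp

lemma coeff_C_X_mul (q : ℂ) (n : ℕ) (f : PowerSeries ℂ) :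
    coeff n (C q * X * f) = if 1 ≤ n then q * coeff (n - 1) f else 0 := by
  rw [← pow_one (X : PowerSeries ℂ)] ; exact coeff_C_Xpow_mul q 1 n f

lemma hF : (1 - C a * X + C p * X ^ 2)⁻¹ = PowerSeries.mk (cc a p) := by
  have h0 : constantCoeff (1 - C a * X + C p * X ^ 2) ≠ 0 := by simp
  rw [PowerSeries.inv_eq_iff_mul_eq_one h0, mul_comm]
  ext n
  simp only [sub_mul, add_mul, one_mul, map_add, map_sub, coeff_C_X_mul, coeff_C_Xpow_mul,
    coeff_mk, coeff_one]
  match n with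
  | 0 => norm_num [cc]
  | 1 => norm_num [cc]
  | (n+2) => norm_num [cc]

lemma hG : ((1 - X) * (1 - C p * X))⁻¹ = PowerSeries.mk (dd p) := by
  have hq : (1 - X) * (1 - C p * X) = 1 - C (1 + p) * X + C p * X ^ 2 := by
    simp only [map_add, map_one]
    ring
  rw [hq]
  have h0 : constantCoeff (1 - C (1 + p) * X + C p * X ^ 2) ≠ 0 := by simp
  rw [PowerSeries.inv_eq_iff_mul_eq_one h0, mul_comm]
  ext n
  simp only [sub_mul, add_mul, one_mul, map_add, map_sub, coeff_C_X_mul, coeff_C_Xpow_mul,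
    coeff_mk, coeff_one]
  match n with
  | 0 => norm_num [dd]
  | 1 => norm_num [dd] <;> ring
  | (n+2) => norm_num [dd] <;> ring

lemma hFp : (1 - C a * X)⁻¹ = PowerSeries.mk (fun n => a ^ n) := by
  have h0 : constantCoeff (1 - C a * X) ≠ 0 := by simp
  rw [PowerSeries.inv_eq_iff_mul_eq_one h0, mul_comm]
  ext n
  simp only [sub_mul, one_mul, map_sub, coeff_C_X_mul, coeff_mk, coeff_one]
  match n with
  | 0 => norm_num
  | (n+1) => norm_num [pow_succ] <;> ring

lemma hGp : ((1 - C a * X) * (1 - C (p * a) * X))⁻¹ =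
    PowerSeries.mk (fun n => a ^ n * dd p n) := by
  have hq : (1 - C a * X) * (1 - C (p * a) * X)
      = 1 - C (a + p * a) * X + C (p * a ^ 2) * X ^ 2 := by
    simp only [map_add, map_mul, map_pow]
    ring
  rw [hq]
  have h0 : constantCoeff (1 - C (a + p * a) * X + C (p * a ^ 2) * X ^ 2) ≠ 0 := by simp
  rw [PowerSeries.inv_eq_iff_mul_eq_one h0, mul_comm]
  ext n
  simp only [sub_mul, add_mul, one_mul, map_add, map_sub, coeff_C_X_mul, coeff_C_Xpow_mul,
    coeff_mk, coeff_one]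
  match n with
  | 0 => norm_num [dd]
  | 1 => norm_num [dd] <;> ring
  | (n+2) => norm_num [dd, pow_succ] <;> ring

lemma hH : (1 - C (p ^ 2) * X ^ 2) *
      ((1 - C a * X + C p * X ^ 2) *
        (1 - C (p * a) * X + C (p ^ 3) * X ^ 2))⁻¹
    = PowerSeries.mk (fun n => cc a p n * dd p n) := by
  have hq : (1 - C a * X + C p * X ^ 2) * (1 - C (p * a) * X + C (p ^ 3) * X ^ 2)
      = 1 - C (a + p * a) * X + C (p ^ 3 + p + p * a ^ 2) * X ^ 2
        - C (a * p ^ 3 + a * p ^ 2) * X ^ 3 + C (p ^ 4) * X ^ 4 := by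
    simp only [map_add, map_mul, map_pow]
    ring
  rw [hq]
  have h0 : constantCoeff (1 - C (a + p * a) * X + C (p ^ 3 + p + p * a ^ 2) * X ^ 2
        - C (a * p ^ 3 + a * p ^ 2) * X ^ 3 + C (p ^ 4) * X ^ 4) ≠ 0 := by simp
  rw [eq_comm, PowerSeries.eq_mul_inv_iff_mul_eq h0, mul_comm]
  ext n
  simp only [sub_mul, add_mul, one_mul, map_add, map_sub, coeff_C_X_mul, coeff_C_Xpow_mul,
    coeff_mk, coeff_one, coeff_C_mul, coeff_X_pow]
  match n with
  | 0 => norm_num [cc, dd]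
  | 1 => norm_num [cc, dd] <;> ring
  | 2 => norm_num [cc, dd] <;> ring
  | 3 => norm_num [cc, dd] <;> ring
  | (n+4) =>
    have e1 : n + 4 - 1 = n + 3 := by omega
    have e2 : n + 4 - 2 = n + 2 := by omega
    have e3 : n + 4 - 3 = n + 1 := by omega
    norm_num [e1, e2, e3, cc, dd, show ¬(4 + n = 2) from by omega,
      show ¬(n + 4 = 2) from by omega] <;> ring

end EulerConv


open EulerConv in
/-- Local Euler-factor computations for the Rankin–Selberg convolution: the
coefficientwise (Hadamard) products of the formal power series
`F = (1 - aT + pT²)⁻¹`, `G = ((1 - T)(1 - pT))⁻¹`, `F' = (1 - aT)⁻¹` satisfy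
(i) `F ∗ G = (1 - p²T²)·((1 - aT + pT²)(1 - paT + p³T²))⁻¹`,
(ii) `F' ∗ G = ((1 - aT)(1 - paT))⁻¹`, and
(iii) `F' ∗ (T·G) = aT·((1 - aT)(1 - paT))⁻¹`. -/
theorem euler_factor_convolutions (a p : ℂ) :
    letI T : PowerSeries ℂ := PowerSeries.X
    letI F : PowerSeries ℂ := (1 - C a * T + C p * T ^ 2)⁻¹
    letI G : PowerSeries ℂ := ((1 - T) * (1 - C p * T))⁻¹
    letI H : PowerSeries ℂ := (1 - C (p ^ 2) * T ^ 2) *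
      ((1 - C a * T + C p * T ^ 2) *
        (1 - C (p * a) * T + C (p ^ 3) * T ^ 2))⁻¹
    letI F' : PowerSeries ℂ := (1 - C a * T)⁻¹
    letI G' : PowerSeries ℂ := ((1 - C a * T) * (1 - C (p * a) * T))⁻¹
    ∀ n : ℕ,
      coeff n F * coeff n G = coeff n H ∧
      coeff n F' * coeff n G = coeff n G' ∧
      coeff n F' * coeff n (T * G) = coeff n (C a * T * G') := by
  intro n
  show coeff n (1 - C a * X + C p * X ^ 2)⁻¹ * _ = _ ∧ _ ∧ _
  rw [hF a p, hG p, hFp a, hGp a p, hH a p]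
  refine ⟨by simp, by simp, ?_⟩
  match n with
  | 0 =>
    simp [coeff_C_X_mul]
  | (m+1) =>
    rw [coeff_succ_X_mul]
    simp only [coeff_C_X_mul, coeff_mk]
    norm_num
    ring
end
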